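/- Let n > 1 and let ν be any real number. Then for all x > 0, the integral ∫_x^∞ K_{ν+n}(t)/t^ν dt is strictly greater than K_{ν+n−1}(x)/x^ν; moreover, when n = 1 one has the equality ∫_x^∞ K_{ν+1}(t)/t^ν dt = K_ν(x)/x^ν for all x > 0. -/

import Mathlib

open MeasureTheory Set Real

open Filter Topology

/-- Modified Bessel function of the second kind:
`K_ν(x) = ∫_0^∞ exp(−x cosh t) cosh(ν t) dt`. -/
noncomputable def besselK (ν x : ℝ) : ℝ :=
  ∫ t in Ioi (0 : ℝ), Real.exp (-(x * Real.cosh t)) * Real.cosh (ν * t)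



lemma sq_quarter_le_exp {t : ℝ} (ht : 0 ≤ t) : t ^ 2 / 4 ≤ Real.exp t := by
  have h := Real.add_one_le_exp (t / 2)
  have h2 : Real.exp t = Real.exp (t / 2) ^ 2 := by
    rw [← Real.exp_nat_mul]; ring_nf
  nlinarith [Real.exp_pos (t / 2)]

lemma exp_bound_lin (a : ℝ) {c : ℝ} (hc : 0 < c) {t : ℝ} (ht : 0 ≤ t) :
    a * t - c * Real.exp t ≤ (a + 1) ^ 2 / c - t := by
  have hq := sq_quarter_le_exp ht
  have h2 : c * (t ^ 2 / 4) ≤ c * Real.exp t := mul_le_mul_of_nonneg_left hq hc.le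
  have key : a * t - c * Real.exp t + t ≤ (a + 1) ^ 2 / c :=
    (le_div_iff₀ hc).2 (by nlinarith [sq_nonneg (c * t - 2 * (a + 1))])
  linarith

lemma integrable_aux (a : ℝ) {c : ℝ} (hc : 0 < c) :
    IntegrableOn (fun t => Real.exp (a * t - c * Real.exp t)) (Ioi (0 : ℝ)) := by
  have hmono : ∀ t ∈ Ioi (0:ℝ), ‖Real.exp (a * t - c * Real.exp t)‖ ≤
      ‖Real.exp ((a + 1) ^ 2 / c) * Real.exp (-(1:ℝ) * t)‖ := by
    intro t ht
    have ht0 : (0:ℝ) ≤ t := le_of_lt ht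
    rw [Real.norm_eq_abs, Real.norm_eq_abs, abs_of_pos (Real.exp_pos _),
      abs_of_pos (by positivity : (0:ℝ) < Real.exp ((a + 1) ^ 2 / c) * Real.exp (-(1:ℝ) * t)),
      ← Real.exp_add]
    apply Real.exp_le_exp.2
    have := exp_bound_lin a hc ht0
    linarith
  exact Integrable.mono ((exp_neg_integrableOn_Ioi 0 one_pos).const_mul _)
    ((Real.continuous_exp.comp (by continuity)).aestronglyMeasurable.restrict)
    ((ae_restrict_iff' measurableSet_Ioi).2 (ae_of_all _ hmono))

lemma exp_half_le_cosh (t : ℝ) : Real.exp t / 2 ≤ Real.cosh t := by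
  rw [Real.cosh_eq]
  have := (Real.exp_pos (-t)).le
  linarith

lemma cosh_le_exp_abs (t : ℝ) : Real.cosh t ≤ Real.exp |t| := by
  rw [← Real.cosh_abs, Real.cosh_eq]
  have h1 : Real.exp (-|t|) ≤ Real.exp |t| := Real.exp_le_exp.2 (by
    have := abs_nonneg t; linarith)
  linarith

lemma abs_sinh_le_exp_abs (t : ℝ) : |Real.sinh t| ≤ Real.exp |t| := by
  rw [Real.abs_sinh]
  calc Real.sinh |t| ≤ Real.cosh |t| := by
        have hs : (0:ℝ) ≤ Real.sinh |t| := by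
          rw [← Real.sinh_zero]; exact Real.sinh_le_sinh.2 (abs_nonneg t)
        nlinarith [Real.cosh_sq_sub_sinh_sq |t|, Real.cosh_pos (x := |t|)]
    _ ≤ Real.exp |t| := by rw [Real.cosh_abs]; exact cosh_le_exp_abs t


lemma integrand_bound {x : ℝ} (hx : 0 < x) (ν : ℝ) {t : ℝ} (ht : 0 ≤ t) :
    Real.exp (-(x * Real.cosh t)) * Real.cosh (ν * t) ≤
      Real.exp (|ν| * t - x / 2 * Real.exp t) := by
  rw [Real.exp_sub, div_eq_mul_inv, ← Real.exp_neg, mul_comm (Real.exp (|ν| * t))]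
  apply mul_le_mul
  · apply Real.exp_le_exp.2
    have h := exp_half_le_cosh t
    nlinarith
  · calc Real.cosh (ν * t) ≤ Real.exp |ν * t| := cosh_le_exp_abs _
      _ = Real.exp (|ν| * t) := by rw [abs_mul, abs_of_nonneg ht]
  · exact (Real.cosh_pos _).le
  · exact (Real.exp_pos _).le

lemma integrand_bound2 {x : ℝ} (hx : 0 < x) (ν : ℝ) {t : ℝ} (ht : 0 ≤ t) :
    Real.cosh t * (Real.exp (-(x * Real.cosh t)) * Real.cosh (ν * t)) ≤
      Real.exp ((|ν| + 1) * t - x / 2 * Real.exp t) := by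
  have h1 : Real.cosh t ≤ Real.exp t := by
    simpa [abs_of_nonneg ht] using cosh_le_exp_abs t
  have h2 := integrand_bound hx ν ht
  have h3 : Real.exp t * Real.exp (|ν| * t - x / 2 * Real.exp t)
      = Real.exp ((|ν| + 1) * t - x / 2 * Real.exp t) := by
    rw [← Real.exp_add]; ring_nf
  calc Real.cosh t * (Real.exp (-(x * Real.cosh t)) * Real.cosh (ν * t))
      ≤ Real.exp t * Real.exp (|ν| * t - x / 2 * Real.exp t) := by
        apply mul_le_mul h1 h2 (by positivity) (by positivity)
    _ = _ := h3

lemma integrand_bound3 {x : ℝ} (hx : 0 < x) (ν : ℝ) {t : ℝ} (ht : 0 ≤ t) :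
    |Real.sinh t * (Real.exp (-(x * Real.cosh t)) * Real.sinh (ν * t))| ≤
      Real.exp ((|ν| + 1) * t - x / 2 * Real.exp t) := by
  have h1 : |Real.sinh t| ≤ Real.exp t := by
    simpa [abs_of_nonneg ht] using abs_sinh_le_exp_abs t
  have h2 : |Real.sinh (ν * t)| ≤ Real.exp (|ν| * t) := by
    calc |Real.sinh (ν * t)| ≤ Real.exp |ν * t| := abs_sinh_le_exp_abs _
      _ = Real.exp (|ν| * t) := by rw [abs_mul, abs_of_nonneg ht]
  have h3 : Real.exp (-(x * Real.cosh t)) ≤ Real.exp (- (x / 2 * Real.exp t)) := by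
    apply Real.exp_le_exp.2
    have h := exp_half_le_cosh t
    nlinarith
  calc |Real.sinh t * (Real.exp (-(x * Real.cosh t)) * Real.sinh (ν * t))|
      = |Real.sinh t| * (Real.exp (-(x * Real.cosh t)) * |Real.sinh (ν * t)|) := by
        rw [abs_mul, abs_mul, abs_of_pos (Real.exp_pos _)]
    _ ≤ Real.exp t * (Real.exp (-(x / 2 * Real.exp t)) * Real.exp (|ν| * t)) := by
        apply mul_le_mul h1 _ (by positivity) (by positivity)
        exact mul_le_mul h3 h2 (abs_nonneg _) (by positivity)
    _ = Real.exp ((|ν| + 1) * t - x / 2 * Real.exp t) := by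
        rw [← Real.exp_add, ← Real.exp_add]; ring_nf

lemma besselK_integrableOn {x : ℝ} (hx : 0 < x) (ν : ℝ) :
    IntegrableOn (fun t => Real.exp (-(x * Real.cosh t)) * Real.cosh (ν * t)) (Ioi (0:ℝ)) := by
  apply Integrable.mono (integrable_aux |ν| (by positivity : (0:ℝ) < x / 2))
    ((Real.continuous_exp.comp (by continuity)).mul
      (Real.continuous_cosh.comp (by continuity))).aestronglyMeasurable.restrict
  refine (ae_restrict_iff' measurableSet_Ioi).2 (ae_of_all _ fun t ht => ?_)
  simp only [Function.comp, Real.norm_eq_abs, Pi.mul_apply, Function.comp_apply]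
  rw [abs_of_pos (mul_pos (Real.exp_pos _) (Real.cosh_pos _)), abs_of_pos (Real.exp_pos _)]
  exact integrand_bound hx ν (le_of_lt ht)

lemma besselK_nonneg {x : ℝ} (ν : ℝ) : 0 ≤ besselK ν x :=
  integral_nonneg fun t => by positivity

lemma besselK_pos {x : ℝ} (hx : 0 < x) (ν : ℝ) : 0 < besselK ν x := by
  rw [besselK, setIntegral_pos_iff_support_of_nonneg_ae
    (ae_of_all _ fun t => by positivity) (besselK_integrableOn hx ν)]
  have : (Function.support fun t => Real.exp (-(x * Real.cosh t)) * Real.cosh (ν * t)) = univ := by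
    ext t; simp only [Function.mem_support, mem_univ, iff_true]
    positivity
  rw [this, univ_inter]
  simp [Real.volume_Ioi]

lemma besselK_le {x t : ℝ} (hx : 0 < x) (hxt : x ≤ t) (ν : ℝ) :
    besselK ν t ≤ Real.exp (x - t) * besselK ν x := by
  rw [besselK, besselK, ← integral_const_mul]
  apply setIntegral_mono_on (besselK_integrableOn (hx.trans_le hxt) ν)
    ((besselK_integrableOn hx ν).const_mul _) measurableSet_Ioi
  intro s _
  have h1 : Real.exp (-(t * Real.cosh s)) ≤ Real.exp (x - t) * Real.exp (-(x * Real.cosh s)) := by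
    rw [← Real.exp_add]
    apply Real.exp_le_exp.2
    have := Real.one_le_cosh s
    nlinarith
  calc Real.exp (-(t * Real.cosh s)) * Real.cosh (ν * s)
      ≤ (Real.exp (x - t) * Real.exp (-(x * Real.cosh s))) * Real.cosh (ν * s) :=
        mul_le_mul_of_nonneg_right h1 (Real.cosh_pos _).le
    _ = Real.exp (x - t) * (Real.exp (-(x * Real.cosh s)) * Real.cosh (ν * s)) := by ring


lemma tendsto_exp_aux (a : ℝ) {c : ℝ} (hc : 0 < c) :
    Tendsto (fun t => Real.exp (a * t - c * Real.exp t)) atTop (𝓝 0) := by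
  apply squeeze_zero_norm' (a := fun t => Real.exp ((a + 1) ^ 2 / c) * Real.exp (-t))
  · filter_upwards [eventually_ge_atTop (0:ℝ)] with t ht
    rw [Real.norm_eq_abs, abs_of_pos (Real.exp_pos _), ← Real.exp_add]
    exact Real.exp_le_exp.2 (by have := exp_bound_lin a hc ht; linarith)
  · simpa using (Real.tendsto_exp_neg_atTop_nhds_zero).const_mul (Real.exp ((a + 1) ^ 2 / c))

lemma integrand_bound1' {x : ℝ} (hx : 0 < x) (ν : ℝ) {t : ℝ} (ht : 0 ≤ t) :
    |Real.exp (-(x * Real.cosh t)) * Real.sinh (ν * t)| ≤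
      Real.exp (|ν| * t - x / 2 * Real.exp t) := by
  rw [abs_mul, abs_of_pos (Real.exp_pos _), Real.exp_sub, div_eq_mul_inv, ← Real.exp_neg,
    mul_comm (Real.exp (|ν| * t))]
  apply mul_le_mul
  · exact Real.exp_le_exp.2 (by have := exp_half_le_cosh t; nlinarith)
  · calc |Real.sinh (ν * t)| ≤ Real.exp |ν * t| := abs_sinh_le_exp_abs _
      _ = Real.exp (|ν| * t) := by rw [abs_mul, abs_of_nonneg ht]
  · exact abs_nonneg _
  · exact (Real.exp_pos _).le

lemma integrableOn_cosh_mul {x : ℝ} (hx : 0 < x) (ν : ℝ) :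
    IntegrableOn (fun t => Real.cosh t * (Real.exp (-(x * Real.cosh t)) * Real.cosh (ν * t)))
      (Ioi (0:ℝ)) := by
  apply Integrable.mono (integrable_aux (|ν| + 1) (by positivity : (0:ℝ) < x / 2))
    (Continuous.aestronglyMeasurable (by continuity)).restrict
  refine (ae_restrict_iff' measurableSet_Ioi).2 (ae_of_all _ fun t ht => ?_)
  rw [Real.norm_eq_abs, Real.norm_eq_abs, abs_of_pos (Real.exp_pos _),
    abs_of_pos (by positivity)]
  exact integrand_bound2 hx ν (le_of_lt ht)

lemma integrableOn_sinh_mul {x : ℝ} (hx : 0 < x) (ν : ℝ) :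
    IntegrableOn (fun t => Real.sinh t * (Real.exp (-(x * Real.cosh t)) * Real.sinh (ν * t)))
      (Ioi (0:ℝ)) := by
  apply Integrable.mono (integrable_aux (|ν| + 1) (by positivity : (0:ℝ) < x / 2))
    (Continuous.aestronglyMeasurable (by continuity)).restrict
  refine (ae_restrict_iff' measurableSet_Ioi).2 (ae_of_all _ fun t ht => ?_)
  rw [Real.norm_eq_abs, Real.norm_eq_abs, abs_of_pos (Real.exp_pos _)]
  exact integrand_bound3 hx ν (le_of_lt ht)

lemma ibp_aux {x : ℝ} (hx : 0 < x) (ν : ℝ) :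
    (∫ t in Ioi (0:ℝ), Real.sinh t * (Real.exp (-(x * Real.cosh t)) * Real.sinh (ν * t)))
      = ν / x * besselK ν x := by
  set f : ℝ → ℝ := fun t => -(1 / x) * (Real.exp (-(x * Real.cosh t)) * Real.sinh (ν * t))
    with hf
  set f' : ℝ → ℝ := fun t => Real.sinh t * (Real.exp (-(x * Real.cosh t)) * Real.sinh (ν * t))
    - ν / x * (Real.exp (-(x * Real.cosh t)) * Real.cosh (ν * t)) with hf'
  have hderiv : ∀ t : ℝ, HasDerivAt f (f' t) t := by
    intro t
    have h1 : HasDerivAt (fun t => -(x * Real.cosh t)) (-(x * Real.sinh t)) t :=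
      ((Real.hasDerivAt_cosh t).const_mul x).neg
    have h2 := h1.exp
    have h3 : HasDerivAt (fun t : ℝ => Real.sinh (ν * t)) (Real.cosh (ν * t) * ν) t :=
      (Real.hasDerivAt_sinh (ν * t)).comp t (by simpa using (hasDerivAt_id t).const_mul ν)
    have h4 := (h2.mul h3).const_mul (-(1 / x))
    refine h4.congr_deriv ?_
    simp only [hf']
    field_simp
    ring
  have hint : IntegrableOn f' (Ioi (0:ℝ)) :=
    (integrableOn_sinh_mul hx ν).sub ((besselK_integrableOn hx ν).const_mul (ν / x))
  have htend : Tendsto f atTop (𝓝 0) := by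
    apply squeeze_zero_norm' (a := fun t => (1 / x) * Real.exp (|ν| * t - x / 2 * Real.exp t))
    · filter_upwards [eventually_ge_atTop (0:ℝ)] with t ht
      rw [hf, Real.norm_eq_abs, abs_mul, abs_neg, abs_of_pos (by positivity : (0:ℝ) < 1 / x)]
      exact mul_le_mul_of_nonneg_left (integrand_bound1' hx ν ht) (by positivity)
    · simpa using (tendsto_exp_aux |ν| (by positivity : (0:ℝ) < x / 2)).const_mul (1 / x)
  have h0 : f 0 = 0 := by simp [hf]
  have key := integral_Ioi_of_hasDerivAt_of_tendsto
    (hderiv 0).continuousAt.continuousWithinAt (fun t _ => hderiv t) hint htend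
  rw [h0, sub_zero] at key
  have hsplit := integral_sub (integrableOn_sinh_mul hx ν)
    ((besselK_integrableOn hx ν).const_mul (ν / x))
  rw [hf'] at key
  rw [key] at hsplit
  have : (∫ t in Ioi (0:ℝ), ν / x * (Real.exp (-(x * Real.cosh t)) * Real.cosh (ν * t)))
      = ν / x * besselK ν x := by
    rw [besselK, integral_const_mul]
  linarith [hsplit, this]


lemma cosh_split (ν t : ℝ) : Real.cosh ((ν + 1) * t)
    = Real.cosh t * Real.cosh (ν * t) + Real.sinh t * Real.sinh (ν * t) := by
  have : (ν + 1) * t = ν * t + t := by ring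
  rw [this, Real.cosh_add]
  ring

lemma cosh_integral_eq {x : ℝ} (hx : 0 < x) (ν : ℝ) :
    (∫ t in Ioi (0:ℝ), Real.cosh t * (Real.exp (-(x * Real.cosh t)) * Real.cosh (ν * t)))
      = besselK (ν + 1) x - ν / x * besselK ν x := by
  have h1 : besselK (ν + 1) x
      = ∫ t in Ioi (0:ℝ), (Real.cosh t * (Real.exp (-(x * Real.cosh t)) * Real.cosh (ν * t))
        + Real.sinh t * (Real.exp (-(x * Real.cosh t)) * Real.sinh (ν * t))) := by
    rw [besselK]
    congr 1 with t
    rw [cosh_split]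
    ring
  rw [integral_add (integrableOn_cosh_mul hx ν) (integrableOn_sinh_mul hx ν), ibp_aux hx ν] at h1
  linarith

lemma besselK_hasDerivAt {x : ℝ} (hx : 0 < x) (ν : ℝ) :
    HasDerivAt (besselK ν) (ν / x * besselK ν x - besselK (ν + 1) x) x := by
  set F : ℝ → ℝ → ℝ := fun y t => Real.exp (-(y * Real.cosh t)) * Real.cosh (ν * t) with hF
  set F' : ℝ → ℝ → ℝ := fun y t =>
    Real.exp (-(y * Real.cosh t)) * -Real.cosh t * Real.cosh (ν * t) with hF'
  have hball : ∀ y ∈ Metric.ball x (x / 2), x / 2 < y := by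
    intro y hy
    rw [Metric.mem_ball, Real.dist_eq, abs_lt] at hy
    linarith
  have main := hasDerivAt_integral_of_dominated_loc_of_deriv_le
    (μ := volume.restrict (Ioi (0:ℝ))) (F := F) (F' := F')
    (x₀ := x) (s := Metric.ball x (x / 2)) (bound := fun t => Real.exp ((|ν| + 1) * t - x / 4 * Real.exp t))
    (Metric.ball_mem_nhds x (by positivity))
    (Eventually.of_forall fun y => (Continuous.aestronglyMeasurable (by
      simp only [hF]; continuity)).restrict)
    (besselK_integrableOn hx ν)
    ((Continuous.aestronglyMeasurable (by simp only [hF']; continuity)).restrict)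
    ((ae_restrict_iff' measurableSet_Ioi).2 (ae_of_all _ ?_))
    (integrable_aux (|ν| + 1) (by positivity : (0:ℝ) < x / 4))
    ((ae_restrict_iff' measurableSet_Ioi).2 (ae_of_all _ ?_))
  · have h2 : (∫ t in Ioi (0:ℝ), F' x t) = ν / x * besselK ν x - besselK (ν + 1) x := by
      have : (∫ t in Ioi (0:ℝ), F' x t)
          = -∫ t in Ioi (0:ℝ), Real.cosh t * (Real.exp (-(x * Real.cosh t)) * Real.cosh (ν * t)) := by
        rw [← integral_neg]
        congr 1 with t
        simp only [hF']
        ring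
      rw [this, cosh_integral_eq hx ν]
      ring
    rw [h2] at main
    exact main.2
  · -- bound
    intro t ht y hy
    have hy2 := hball y hy
    have hypos : 0 < y := lt_trans (by positivity) hy2
    have ht0 : (0:ℝ) ≤ t := le_of_lt ht
    have hb := integrand_bound2 (by positivity : (0:ℝ) < x / 2) ν ht0
    have hmono : Real.exp (-(y * Real.cosh t)) ≤ Real.exp (-(x / 2 * Real.cosh t)) :=
      Real.exp_le_exp.2 (by nlinarith [Real.cosh_pos t, Real.one_le_cosh t])
    have : ‖F' y t‖ = Real.cosh t * (Real.exp (-(y * Real.cosh t)) * Real.cosh (ν * t)) := by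
      simp only [hF', Real.norm_eq_abs, abs_mul, abs_neg,
        abs_of_pos (Real.exp_pos _), abs_of_pos (Real.cosh_pos _)]
      ring
    rw [this]
    calc Real.cosh t * (Real.exp (-(y * Real.cosh t)) * Real.cosh (ν * t))
        ≤ Real.cosh t * (Real.exp (-(x / 2 * Real.cosh t)) * Real.cosh (ν * t)) := by
          apply mul_le_mul_of_nonneg_left _ (Real.cosh_pos t).le
          exact mul_le_mul_of_nonneg_right hmono (Real.cosh_pos _).le
      _ ≤ Real.exp ((|ν| + 1) * t - x / 2 / 2 * Real.exp t) := hb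
      _ = Real.exp ((|ν| + 1) * t - x / 4 * Real.exp t) := by ring_nf
  · -- differentiability
    intro t ht y hy
    have h1 : HasDerivAt (fun y : ℝ => -(y * Real.cosh t)) (-Real.cosh t) y := by
      exact (hasDerivAt_mul_const (Real.cosh t)).neg
    exact (h1.exp.mul_const (Real.cosh (ν * t)))


lemma rpow_le_exp_half {s x t : ℝ} (hx : 0 < x) (hxt : x ≤ t) :
    t ^ s ≤ (x ^ s + Real.exp (2 * s ^ 2)) * Real.exp (t / 2) := by
  have ht : 0 < t := lt_of_lt_of_le hx hxt
  have h1 : (1:ℝ) ≤ Real.exp (t / 2) := by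
    rw [Real.one_le_exp_iff]; positivity
  rcases le_or_gt s 0 with hs | hs
  · calc t ^ s ≤ x ^ s := Real.rpow_le_rpow_of_nonpos hx hxt hs
      _ ≤ (x ^ s + Real.exp (2 * s ^ 2)) * 1 := by
          have := (Real.exp_pos (2 * s ^ 2)).le
          nlinarith
      _ ≤ _ := by
          apply mul_le_mul_of_nonneg_left h1
          positivity
  · have hlog : Real.log t ≤ 2 * Real.sqrt t := by
      have hst : 0 < Real.sqrt t := Real.sqrt_pos.2 ht
      have h2 : Real.log (Real.sqrt t) ≤ Real.sqrt t - 1 := Real.log_le_sub_one_of_pos hst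
      have h3 : Real.log t = 2 * Real.log (Real.sqrt t) := by
        conv_lhs => rw [← Real.mul_self_sqrt ht.le]
        rw [Real.log_mul hst.ne' hst.ne']
        ring
      linarith
    have key : s * Real.log t ≤ 2 * s ^ 2 + t / 2 := by
      have h4 : s * Real.log t ≤ s * (2 * Real.sqrt t) :=
        mul_le_mul_of_nonneg_left hlog hs.le
      have h5 : Real.sqrt t ^ 2 = t := Real.sq_sqrt ht.le
      nlinarith [sq_nonneg (2 * s - Real.sqrt t), Real.sqrt_nonneg t]
    calc t ^ s = Real.exp (Real.log t * s) := Real.rpow_def_of_pos ht s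
      _ ≤ Real.exp (2 * s ^ 2 + t / 2) := Real.exp_le_exp.2 (by rw [mul_comm]; exact key)
      _ = Real.exp (2 * s ^ 2) * Real.exp (t / 2) := Real.exp_add _ _
      _ ≤ _ := by
          apply mul_le_mul_of_nonneg_right _ (Real.exp_pos _).le
          have : (0:ℝ) ≤ x ^ s := (Real.rpow_pos_of_pos hx s).le
          linarith

lemma besselK_continuousAt {x : ℝ} (hx : 0 < x) (μ : ℝ) : ContinuousAt (besselK μ) x :=
  (besselK_hasDerivAt hx μ).continuousAt

lemma integrableOn_tail (μ ν : ℝ) {x : ℝ} (hx : 0 < x) :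
    IntegrableOn (fun t => besselK μ t / t ^ ν) (Ioi x) := by
  set C : ℝ := Real.exp x * besselK μ x * (x ^ (-ν) + Real.exp (2 * ν ^ 2)) with hC
  have hC0 : 0 ≤ C := by
    have := besselK_nonneg (x := x) μ
    have := (Real.rpow_pos_of_pos hx (-ν)).le
    positivity
  have hmeas : AEStronglyMeasurable (fun t => besselK μ t / t ^ ν)
      (volume.restrict (Ioi x)) := by
    apply ContinuousOn.aestronglyMeasurable _ measurableSet_Ioi
    intro t ht
    have ht0 : 0 < t := lt_trans hx ht
    exact ((besselK_continuousAt ht0 μ).continuousWithinAt.div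
      (Real.continuousAt_rpow_const t ν (Or.inl ht0.ne')).continuousWithinAt
      (Real.rpow_pos_of_pos ht0 ν).ne')
  apply Integrable.mono (g := fun t => C * Real.exp (-(1/2) * t))
    (((exp_neg_integrableOn_Ioi x (by norm_num : (0:ℝ) < 1/2))).const_mul C) hmeas
  refine (ae_restrict_iff' measurableSet_Ioi).2 (ae_of_all _ fun t ht => ?_)
  have ht0 : 0 < t := lt_trans hx ht
  have htν : 0 < t ^ ν := Real.rpow_pos_of_pos ht0 ν
  rw [Real.norm_eq_abs, Real.norm_eq_abs,
    abs_of_nonneg (div_nonneg (besselK_nonneg μ) htν.le),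
    abs_of_nonneg (mul_nonneg hC0 (Real.exp_pos _).le)]
  have h1 : besselK μ t / t ^ ν = besselK μ t * t ^ (-ν) := by
    rw [Real.rpow_neg ht0.le, div_eq_mul_inv]
  rw [h1]
  have h2 : t ^ (-ν) ≤ (x ^ (-ν) + Real.exp (2 * ν ^ 2)) * Real.exp (t / 2) := by
    have := rpow_le_exp_half (s := -ν) hx (le_of_lt ht)
    simpa using this
  calc besselK μ t * t ^ (-ν)
      ≤ (Real.exp (x - t) * besselK μ x) * ((x ^ (-ν) + Real.exp (2 * ν ^ 2)) * Real.exp (t / 2)) := by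
        apply mul_le_mul (besselK_le hx (le_of_lt ht) μ) h2
          (Real.rpow_pos_of_pos ht0 (-ν)).le
        have := besselK_nonneg (x := x) μ
        positivity
    _ = C * Real.exp (-(1/2) * t) := by
        rw [hC, Real.exp_sub]
        rw [show (-(1/2) * t) = t / 2 - t by ring, Real.exp_sub]
        field_simp

lemma tendsto_tail (μ ν : ℝ) :
    Tendsto (fun t => besselK μ t / t ^ ν) atTop (𝓝 0) := by
  apply squeeze_zero'
  · filter_upwards [eventually_gt_atTop (0:ℝ)] with t ht
    exact div_nonneg (besselK_nonneg μ) (Real.rpow_pos_of_pos ht ν).le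
  · show ∀ᶠ t in atTop, besselK μ t / t ^ ν ≤
      (Real.exp 1 * besselK μ 1) * (t ^ (-ν) * Real.exp (-1 * t))
    filter_upwards [eventually_ge_atTop (1:ℝ)] with t ht
    have ht0 : 0 < t := lt_of_lt_of_le one_pos ht
    have h1 : besselK μ t / t ^ ν = besselK μ t * t ^ (-ν) := by
      rw [Real.rpow_neg ht0.le, div_eq_mul_inv]
    rw [h1]
    have h2 := besselK_le one_pos ht μ
    calc besselK μ t * t ^ (-ν)
        ≤ (Real.exp (1 - t) * besselK μ 1) * t ^ (-ν) :=
          mul_le_mul_of_nonneg_right h2 (Real.rpow_pos_of_pos ht0 (-ν)).le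
      _ = (Real.exp 1 * besselK μ 1) * (t ^ (-ν) * Real.exp (-1 * t)) := by
          rw [Real.exp_sub]
          rw [show (-1 * t) = -t by ring, Real.exp_neg]
          field_simp
  · have := (tendsto_rpow_mul_exp_neg_mul_atTop_nhds_zero (-ν) 1 one_pos).const_mul
      (Real.exp 1 * besselK μ 1)
    simpa using this

lemma g_hasDerivAt (μ ν : ℝ) {x : ℝ} (hx : 0 < x) :
    HasDerivAt (fun t => besselK μ t / t ^ ν)
      ((μ - ν) * (besselK μ x / x ^ (ν + 1)) - besselK (μ + 1) x / x ^ ν) x := by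
  have h1 := besselK_hasDerivAt hx μ
  have h2 : HasDerivAt (fun t : ℝ => t ^ ν) (ν * x ^ (ν - 1)) x :=
    Real.hasDerivAt_rpow_const (Or.inl hx.ne')
  have h3 := h1.div h2 (Real.rpow_pos_of_pos hx ν).ne'
  refine h3.congr_deriv ?_
  have hA : (0:ℝ) < x ^ ν := Real.rpow_pos_of_pos hx ν
  have e1 : x ^ (ν + 1) = x ^ ν * x := by rw [Real.rpow_add hx, Real.rpow_one]
  have e2 : x ^ (ν - 1) = x ^ ν / x := by rw [Real.rpow_sub hx, Real.rpow_one]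
  rw [e1, e2]
  field_simp
  ring

lemma ftc_key (μ ν : ℝ) {x : ℝ} (hx : 0 < x) :
    (∫ t in Ioi x, (besselK (μ + 1) t / t ^ ν - (μ - ν) * (besselK μ t / t ^ (ν + 1))))
      = besselK μ x / x ^ ν := by
  have key := integral_Ioi_of_hasDerivAt_of_tendsto
    (f := fun t => -(besselK μ t / t ^ ν))
    (f' := fun t => besselK (μ + 1) t / t ^ ν - (μ - ν) * (besselK μ t / t ^ (ν + 1)))
    (m := 0)
    ((g_hasDerivAt μ ν hx).neg.continuousAt.continuousWithinAt)
    (fun t ht => by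
      have := (g_hasDerivAt μ ν (lt_trans hx ht)).neg
      exact this.congr_deriv (by ring))
    (((integrableOn_tail (μ + 1) ν hx)).sub ((integrableOn_tail μ (ν + 1) hx).const_mul (μ - ν)))
    (by simpa using (tendsto_tail μ ν).neg)
  rw [key]
  ring

lemma tail_pos (μ ν : ℝ) {x : ℝ} (hx : 0 < x) :
    0 < ∫ t in Ioi x, besselK μ t / t ^ ν := by
  have hnn : 0 ≤ᵐ[volume.restrict (Ioi x)] fun t => besselK μ t / t ^ ν := by
    refine (ae_restrict_iff' measurableSet_Ioi).2 (ae_of_all _ fun t ht => ?_)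
    have ht0 : 0 < t := lt_trans hx ht
    exact div_nonneg (besselK_nonneg μ) (Real.rpow_pos_of_pos ht0 ν).le
  rw [setIntegral_pos_iff_support_of_nonneg_ae hnn (integrableOn_tail μ ν hx)]
  refine lt_of_lt_of_le
    (by simp [Real.volume_Ioi] : (0:ENNReal) < volume (Ioi x)) (measure_mono ?_)
  intro t ht
  refine ⟨ne_of_gt ?_, ht⟩
  have ht0 : 0 < t := lt_trans hx ht
  exact div_pos (besselK_pos ht0 μ) (Real.rpow_pos_of_pos ht0 ν)

theorem stmt_2 (ν n : ℝ) :
    (n > 1 → ∀ x : ℝ, 0 < x →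
      (∫ t in Ioi x, besselK (ν + n) t / t ^ ν) > besselK (ν + n - 1) x / x ^ ν) ∧
    (∀ x : ℝ, 0 < x →
      (∫ t in Ioi x, besselK (ν + 1) t / t ^ ν) = besselK ν x / x ^ ν) := by
  constructor
  · intro hn x hx
    have key := ftc_key (ν + n - 1) ν hx
    have e1 : ν + n - 1 + 1 = ν + n := by ring
    have e2 : ν + n - 1 - ν = n - 1 := by ring
    rw [e1, e2] at key
    have hsub := integral_sub (integrableOn_tail (ν + n) ν hx)
      ((integrableOn_tail (ν + n - 1) (ν + 1) hx).const_mul (n - 1))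
    rw [key] at hsub
    have hpos := tail_pos (ν + n - 1) (ν + 1) hx
    have hmul : (∫ t in Ioi x, (n - 1) * (besselK (ν + n - 1) t / t ^ (ν + 1)))
        = (n - 1) * ∫ t in Ioi x, besselK (ν + n - 1) t / t ^ (ν + 1) :=
      integral_const_mul _ _
    rw [hmul] at hsub
    have : (∫ t in Ioi x, besselK (ν + n) t / t ^ ν)
        = besselK (ν + n - 1) x / x ^ ν
          + (n - 1) * ∫ t in Ioi x, besselK (ν + n - 1) t / t ^ (ν + 1) := by
      linarith
    rw [this]
    nlinarith
  · intro x hx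
    have key := ftc_key ν ν hx
    rw [← key]
    congr 1 with t
    simp
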